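/- arXiv:2306.12328 — 3 statements merged into one kernel-verified Lean document; each statement's English description precedes it below -/
import Mathlib

section
/- For a simple thermodynamic system with smooth Lagrangian L(q, v, S) on ℝⁿ × ℝⁿ × ℝ, external force F^ext and friction force F^fr, suppose curves q(t), S(t) satisfy d/dt(∂L/∂v) − ∂L/∂q = F^fr + F^ext and (∂L/∂S)·Ṡ = ⟨F^fr, q̇⟩. Then the total energy E(q, v, S) = ⟨∂L/∂v, v⟩ − L(q, v, S) satisfies d/dt E(q, q̇, S) = ⟨F^ext(q, q̇, S), q̇⟩ (the first law: the friction contribution cancels). -/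
open Matrix

/-- First law for a simple thermodynamic system.
If `(q, S)` satisfies `d/dt(∂L/∂v) − ∂L/∂q = F^fr + F^ext` and the phenomenological
constraint `(∂L/∂S)·Ṡ = ⟨F^fr, q̇⟩`, then the total energy
`E(q,v,S) = ⟨∂L/∂v, v⟩ − L(q,v,S)` satisfies `d/dt E = ⟨F^ext, q̇⟩`. -/
theorem first_law_simple_thermodynamic {n : ℕ}
    (L : (Fin n → ℝ) → (Fin n → ℝ) → ℝ → ℝ)
    (Lq Lv : (Fin n → ℝ) → (Fin n → ℝ) → ℝ → (Fin n → ℝ))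
    (LS : (Fin n → ℝ) → (Fin n → ℝ) → ℝ → ℝ)
    (Ffr Fext : (Fin n → ℝ) → (Fin n → ℝ) → ℝ → (Fin n → ℝ))
    (q q' q'' : ℝ → Fin n → ℝ) (S S' : ℝ → ℝ)
    (hq : ∀ t, HasDerivAt q (q' t) t)
    (hq' : ∀ t, HasDerivAt q' (q'' t) t)
    (hS : ∀ t, HasDerivAt S (S' t) t)
    -- chain rule for `L` along the curve, with partial gradients `Lq`, `Lv` and `∂L/∂S = LS`
    (hL : ∀ t, HasDerivAt (fun s => L (q s) (q' s) (S s))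
      (Lq (q t) (q' t) (S t) ⬝ᵥ q' t + Lv (q t) (q' t) (S t) ⬝ᵥ q'' t
        + LS (q t) (q' t) (S t) * S' t) t)
    -- Euler–Lagrange equations with friction and external forces
    (hEL : ∀ t, HasDerivAt (fun s => Lv (q s) (q' s) (S s))
      (Lq (q t) (q' t) (S t) + Ffr (q t) (q' t) (S t) + Fext (q t) (q' t) (S t)) t)
    -- phenomenological (entropy) constraint
    (hent : ∀ t, LS (q t) (q' t) (S t) * S' t = Ffr (q t) (q' t) (S t) ⬝ᵥ q' t) :
    ∀ t, HasDerivAt (fun s => Lv (q s) (q' s) (S s) ⬝ᵥ q' s - L (q s) (q' s) (S s))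
      (Fext (q t) (q' t) (S t) ⬝ᵥ q' t) t := by
  intro t
  have hA := hasDerivAt_pi.mp (hEL t)
  have hB := hasDerivAt_pi.mp (hq' t)
  have hdot : HasDerivAt (fun s => Lv (q s) (q' s) (S s) ⬝ᵥ q' s)
      ((Lq (q t) (q' t) (S t) + Ffr (q t) (q' t) (S t) + Fext (q t) (q' t) (S t)) ⬝ᵥ q' t
        + Lv (q t) (q' t) (S t) ⬝ᵥ q'' t) t := by
    simp only [dotProduct, Finset.sum_add_distrib]
    rw [← Finset.sum_add_distrib]
    exact HasDerivAt.fun_sum fun i _ => (hA i).mul (hB i)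
  have h := hdot.fun_sub (hL t)
  convert h using 1
  · rfl
  · rfl
  have := hent t
  simp only [add_dotProduct]
  linarith
end

section
/- Under the hypotheses of the previous setting, if in addition ⟨F^fr_k, q̇_k⟩ ≤ 0 for all k and J_{kℓ} ≤ 0 for all k ≠ ℓ, then the total entropy production rate Ṡ = Σ_k Ṡ_k is nonnegative (second law for the isolated interconnected system). -/
open Matrix

/-- Second law for the isolated interconnected system: if
`⟨F^fr_k, q̇_k⟩ ≤ 0` for all `k` and `J_{kℓ} ≤ 0` for `k ≠ ℓ`, then the total
entropy production rate `Ṡ = Σ_k Ṡ_k` is nonnegative. -/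
theorem second_law_interconnected {P n : ℕ}
    (T : Fin P → ℝ) (hT : ∀ k, 0 < T k)
    (Ffr v : Fin P → (Fin n → ℝ)) (S' : Fin P → ℝ)
    (hfr : ∀ k, Ffr k ⬝ᵥ v k ≤ 0)
    (J : Fin P → Fin P → ℝ)
    (hJsymm : ∀ k l, J k l = J l k) (hJdiag : ∀ k, J k k = 0)
    (hJneg : ∀ k l, k ≠ l → J k l ≤ 0)
    (heq : ∀ k, T k * S' k = -(Ffr k ⬝ᵥ v k) + ∑ l, J k l * (T k - T l)) :
    0 ≤ ∑ k, S' k := by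
  have hT' : ∀ k, T k ≠ 0 := fun k => (hT k).ne'
  have hS : ∀ k, S' k = (-(Ffr k ⬝ᵥ v k)) / T k + ∑ l, J k l * (T k - T l) / T k := by
    intro k
    rw [← Finset.sum_div, ← add_div, eq_div_iff (hT' k), mul_comm]
    exact heq k
  rw [Finset.sum_congr rfl fun k _ => hS k, Finset.sum_add_distrib]
  have h1 : 0 ≤ ∑ k, (-(Ffr k ⬝ᵥ v k)) / T k := by
    apply Finset.sum_nonneg
    intro k _
    exact div_nonneg (by linarith [hfr k]) (hT k).le
  have h2 : 0 ≤ ∑ k, ∑ l, J k l * (T k - T l) / T k := by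
    have key : (2 : ℝ) * ∑ k, ∑ l, J k l * (T k - T l) / T k
        = ∑ k, ∑ l, (J k l * (T k - T l) / T k + J l k * (T l - T k) / T l) := by
      simp only [Finset.sum_add_distrib]
      rw [show (∑ k, ∑ l, J l k * (T l - T k) / T l) = ∑ k, ∑ l, J k l * (T k - T l) / T k
        from Finset.sum_comm]
      ring
    have hkey : 0 ≤ (2 : ℝ) * ∑ k, ∑ l, J k l * (T k - T l) / T k := by
      rw [key]
      apply Finset.sum_nonneg; intro k _
      apply Finset.sum_nonneg; intro l _
      rcases eq_or_ne k l with rfl | hne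
      · simp [hJdiag]
      · rw [← hJsymm k l]
        have hJ := hJneg k l hne
        have h3 : (T k - T l) / T k + (T l - T k) / T l ≤ 0 := by
          rw [div_add_div _ _ (hT' k) (hT' l)]
          apply div_nonpos_of_nonpos_of_nonneg
          · nlinarith [sq_nonneg (T k - T l)]
          · exact (mul_pos (hT k) (hT l)).le
        have h4 : 0 ≤ J k l * ((T k - T l) / T k + (T l - T k) / T l) := by
          have h5 := mul_nonneg (neg_nonneg.mpr hJ) (neg_nonneg.mpr h3)
          rwa [neg_mul_neg] at h5
        have h6 : J k l * ((T k - T l) / T k + (T l - T k) / T l)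
            = J k l * (T k - T l) / T k + J k l * (T l - T k) / T l := by ring
        linarith
    linarith
  linarith
end

section
/- For the full adiabatic piston system (m₁+m₂) q̈ = p₁A₁ − p₂A₂ − (λ₁+λ₂) q̇, T¹ Ṡ₁ = κ(T² − T¹) + λ₁ q̇², T² Ṡ₂ = κ(T¹ − T²) + λ₂ q̇², with κ, λ₁, λ₂ ≥ 0 and T¹, T² > 0, the total entropy S₁ + S₂ is nondecreasing along solutions. -/
/-- For the full adiabatic piston system
`(m₁+m₂) q̈ = p₁A₁ − p₂A₂ − (λ₁+λ₂) q̇`, `T¹ Ṡ₁ = κ(T² − T¹) + λ₁ q̇²`,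
`T² Ṡ₂ = κ(T¹ − T²) + λ₂ q̇²`, with `κ, λ₁, λ₂ ≥ 0` and `T¹, T² > 0`,
the total entropy `S₁ + S₂` is nondecreasing along solutions. -/
theorem piston_total_entropy_nondecreasing
    (m₁ m₂ A₁ A₂ κ : ℝ) (hm₁ : 0 < m₁) (hm₂ : 0 < m₂) (hκ : 0 ≤ κ)
    (p₁ p₂ T1 T2 lam₁ lam₂ : ℝ → ℝ)
    (hT1 : ∀ t, 0 < T1 t) (hT2 : ∀ t, 0 < T2 t)
    (hlam₁ : ∀ t, 0 ≤ lam₁ t) (hlam₂ : ∀ t, 0 ≤ lam₂ t)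
    (q q' q'' S₁ S₂ S₁' S₂' : ℝ → ℝ)
    (hq : ∀ t, HasDerivAt q (q' t) t)
    (hq' : ∀ t, HasDerivAt q' (q'' t) t)
    (hS₁ : ∀ t, HasDerivAt S₁ (S₁' t) t)
    (hS₂ : ∀ t, HasDerivAt S₂ (S₂' t) t)
    (hmech : ∀ t, (m₁ + m₂) * q'' t = p₁ t * A₁ - p₂ t * A₂ - (lam₁ t + lam₂ t) * q' t)
    (hent1 : ∀ t, T1 t * S₁' t = κ * (T2 t - T1 t) + lam₁ t * (q' t) ^ 2)
    (hent2 : ∀ t, T2 t * S₂' t = κ * (T1 t - T2 t) + lam₂ t * (q' t) ^ 2) :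
    Monotone (fun t => S₁ t + S₂ t) := by
  have hderiv : ∀ t, HasDerivAt (fun t => S₁ t + S₂ t) (S₁' t + S₂' t) t :=
    fun t => (hS₁ t).add (hS₂ t)
  apply monotone_of_deriv_nonneg
  · exact fun t => ((hderiv t).differentiableAt).differentiableWithinAt.differentiableAt
      (Filter.univ_mem)
  · intro t
    rw [(hderiv t).deriv]
    have h1 := hT1 t
    have h2 := hT2 t
    have e1 : S₁' t = (κ * (T2 t - T1 t) + lam₁ t * (q' t) ^ 2) / T1 t := by
      field_simp; linarith [hent1 t]
    have e2 : S₂' t = (κ * (T1 t - T2 t) + lam₂ t * (q' t) ^ 2) / T2 t := by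
      field_simp; linarith [hent2 t]
    rw [e1, e2]
    rw [div_add_div _ _ (ne_of_gt h1) (ne_of_gt h2)]
    apply div_nonneg _ (by positivity)
    have key : (κ * (T2 t - T1 t) + lam₁ t * (q' t) ^ 2) * T2 t +
        T1 t * (κ * (T1 t - T2 t) + lam₂ t * (q' t) ^ 2)
        = κ * (T2 t - T1 t) ^ 2 + lam₁ t * (q' t) ^ 2 * T2 t +
          lam₂ t * (q' t) ^ 2 * T1 t := by ring
    rw [key]
    have := hlam₁ t; have := hlam₂ t
    positivity
end
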